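/- Let p > 1, n ≥ 1 (real numbers), and β ≥ 1 + 1/(p−1). Then n ∫₀¹ e^{(1 − r^p)/β} r^{n−1} dr ≤ e^{(1 − (n/(n+1))^p)/β}. -/

import Mathlib

open Real intervalIntegral Set

lemma fderiv1 (p β : ℝ) (hp : 1 ≤ p) (r : ℝ) :
    HasDerivAt (fun r : ℝ => Real.exp ((1 - r^p)/β))
      (Real.exp ((1 - r^p)/β) * (-(p * r^(p-1))/β)) r := by
  have h1 : HasDerivAt (fun r : ℝ => (1 - r^p)/β) (-(p * r^(p-1))/β) r := by
    have := (Real.hasDerivAt_rpow_const (x := r) (p := p) (Or.inr hp)).const_sub 1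
    exact this.div_const β
  exact h1.exp

lemma fderiv2 (p β : ℝ) (hp : 1 < p) (hβ0 : 0 < β) (r : ℝ) (hr : r ≠ 0) :
    HasDerivAt (fun r : ℝ => Real.exp ((1 - r^p)/β) * (-(p * r^(p-1))/β))
      ((Real.exp ((1 - r^p)/β) * (-(p * r^(p-1))/β)) * (-(p * r^(p-1))/β)
        + Real.exp ((1 - r^p)/β) * (-(p * ((p-1) * r^(p-2)))/β)) r := by
  have h2 : HasDerivAt (fun r : ℝ => -(p * r^(p-1))/β)
      (-(p * ((p-1) * r^(p-2)))/β) r := by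
    have h := ((Real.hasDerivAt_rpow_const (x := r) (p := p-1) (Or.inl hr)).const_mul p).neg.div_const β
    rw [show p-1-1 = p-2 by ring] at h
    exact h
  exact (fderiv1 p β hp.le r).mul h2

lemma fderiv2_nonpos (p β : ℝ) (hp : 1 < p) (hβ0 : 0 < β) (hpβ : p/β ≤ p - 1)
    (r : ℝ) (hr0 : 0 < r) (hr1 : r < 1) :
    (Real.exp ((1 - r^p)/β) * (-(p * r^(p-1))/β)) * (-(p * r^(p-1))/β)
        + Real.exp ((1 - r^p)/β) * (-(p * ((p-1) * r^(p-2)))/β) ≤ 0 := by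
  set E := Real.exp ((1 - r^p)/β) with hE
  have hEpos : 0 < E := Real.exp_pos _
  have e1 : r^(p-1) * r^(p-1) = r^(p-2) * r^p := by
    rw [← Real.rpow_add hr0, ← Real.rpow_add hr0]; ring_nf
  have key : (E * (-(p * r^(p-1))/β)) * (-(p * r^(p-1))/β)
        + E * (-(p * ((p-1) * r^(p-2)))/β)
      = (E * (p/β) * r^(p-2)) * ((p/β) * r^p - (p-1)) := by
    calc (E * (-(p * r^(p-1))/β)) * (-(p * r^(p-1))/β) + E * (-(p * ((p-1) * r^(p-2)))/β)
        = E*(p/β)*(p/β)*(r^(p-1)*r^(p-1)) - E*(p/β)*(p-1)*r^(p-2) := by ring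
      _ = E*(p/β)*(p/β)*(r^(p-2)*r^p) - E*(p/β)*(p-1)*r^(p-2) := by rw [e1]
      _ = (E * (p/β) * r^(p-2)) * ((p/β) * r^p - (p-1)) := by ring
  rw [key]
  apply mul_nonpos_of_nonneg_of_nonpos
  · positivity
  · have h1 : r^p ≤ 1 := Real.rpow_le_one hr0.le hr1.le (by positivity)
    have h2 : (p/β) * r^p ≤ p/β := by
      nlinarith [div_pos (by linarith : (0:ℝ) < p) hβ0]
    linarith

lemma fconcave (p β : ℝ) (hp : 1 < p) (hβ0 : 0 < β) (hpβ : p/β ≤ p - 1) :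
    ConcaveOn ℝ (Icc (0:ℝ) 1) (fun r : ℝ => Real.exp ((1 - r^p)/β)) := by
  set f' : ℝ → ℝ := fun r => Real.exp ((1 - r^p)/β) * (-(p * r^(p-1))/β) with hf'
  have hdiff : ∀ r : ℝ, HasDerivAt (fun r : ℝ => Real.exp ((1 - r^p)/β)) (f' r) r :=
    fun r => fderiv1 p β hp.le r
  have hderiv_eq : deriv (fun r : ℝ => Real.exp ((1 - r^p)/β)) = f' :=
    funext fun r => (hdiff r).deriv
  apply AntitoneOn.concaveOn_of_deriv (convex_Icc 0 1)
  · exact fun r _ => ((hdiff r).continuousAt).continuousWithinAt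
  · exact fun r _ => ((hdiff r).differentiableAt).differentiableWithinAt
  · rw [hderiv_eq, interior_Icc]
    apply antitoneOn_of_deriv_nonpos (convex_Ioo 0 1)
    · exact fun r hr => ((fderiv2 p β hp hβ0 r (ne_of_gt hr.1)).continuousAt).continuousWithinAt
    · rw [isOpen_Ioo.interior_eq]
      exact fun r hr => ((fderiv2 p β hp hβ0 r (ne_of_gt hr.1)).differentiableAt).differentiableWithinAt
    · rw [isOpen_Ioo.interior_eq]
      intro r hr
      rw [(fderiv2 p β hp hβ0 r (ne_of_gt hr.1)).deriv]
      exact fderiv2_nonpos p β hp hβ0 hpβ r hr.1 hr.2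

lemma tangent_le {S : Set ℝ} {f : ℝ → ℝ} {c m y : ℝ} (hf : ConcaveOn ℝ S f)
    (hd : HasDerivAt f c m) (hm : m ∈ S) (hy : y ∈ S) : f y ≤ f m + c * (y - m) := by
  have hg : ConvexOn ℝ S (-f) := hf.neg
  rcases lt_trichotomy y m with h | h | h
  · have := hg.slope_le_of_hasDerivAt hy hm h hd.neg
    rw [slope_def_field] at this
    have hym : 0 < m - y := by linarith
    rw [div_le_iff₀ hym] at this
    simp only [Pi.neg_apply] at this
    nlinarith
  · simp [h]
  · have := hg.le_slope_of_hasDerivAt hm hy h hd.neg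
    rw [slope_def_field] at this
    have hym : 0 < y - m := by linarith
    rw [le_div_iff₀ hym] at this
    simp only [Pi.neg_apply] at this
    nlinarith

theorem stmt10 (p : ℝ) (hp : 1 < p) (n : ℝ) (hn : 1 ≤ n) (β : ℝ)
    (hβ : 1 + 1/(p-1) ≤ β) :
    n * ∫ r in (0:ℝ)..1, Real.exp ((1 - r^p)/β) * r^(n-1) ≤
      Real.exp ((1 - (n/(n+1))^p)/β) := by
  have hp1 : (0:ℝ) < p - 1 := by linarith
  have hβ0 : (0:ℝ) < β := by
    have : (0:ℝ) < 1/(p-1) := by positivity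
    linarith
  have hpβ : p/β ≤ p - 1 := by
    rw [div_le_iff₀ hβ0]
    have hinv : (p-1) * (1/(p-1)) = 1 := by field_simp
    nlinarith
  have hn0 : (0:ℝ) < n := by linarith
  have hn1 : (0:ℝ) < n + 1 := by linarith
  set m : ℝ := n/(n+1) with hm
  have hm0 : 0 < m := by positivity
  have hm1 : m < 1 := by rw [hm, div_lt_one hn1]; linarith
  have hmIcc : m ∈ Icc (0:ℝ) 1 := ⟨hm0.le, hm1.le⟩
  set c : ℝ := Real.exp ((1 - m^p)/β) * (-(p * m^(p-1))/β) with hc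
  set A : ℝ := Real.exp ((1 - m^p)/β) - c * m with hA
  -- pointwise tangent bound
  have htan : ∀ r ∈ Icc (0:ℝ) 1,
      Real.exp ((1 - r^p)/β) ≤ A + c * r := by
    intro r hr
    have h1 := tangent_le (fconcave p β hp hβ0 hpβ) (fderiv1 p β hp.le m) hmIcc hr
    rw [← hc] at h1
    have h2 : A + c * r = Real.exp ((1-m^p)/β) + c * (r - m) := by rw [hA]; ring
    rw [h2]; exact h1
  -- continuity facts
  have hcont_pow : ∀ q : ℝ, 0 ≤ q → Continuous (fun r : ℝ => r ^ q) := fun q hq =>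
    continuous_iff_continuousAt.mpr (fun r => Real.continuousAt_rpow_const r q (Or.inr hq))
  have hcontf : Continuous (fun r : ℝ => Real.exp ((1 - r^p)/β)) :=
    continuous_iff_continuousAt.mpr (fun r => (fderiv1 p β hp.le r).continuousAt)
  have hcontn : Continuous (fun r : ℝ => r ^ (n-1)) := hcont_pow (n-1) (by linarith)
  have hintF : IntervalIntegrable (fun r : ℝ => Real.exp ((1 - r^p)/β) * r^(n-1))
      MeasureTheory.volume 0 1 := (hcontf.mul hcontn).intervalIntegrable 0 1
  have hintG : IntervalIntegrable (fun r : ℝ => (A + c * r) * r^(n-1))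
      MeasureTheory.volume 0 1 :=
    (((continuous_const.add (continuous_const.mul continuous_id)).mul hcontn)).intervalIntegrable 0 1
  -- integral comparison
  have hle : ∫ r in (0:ℝ)..1, Real.exp ((1 - r^p)/β) * r^(n-1)
      ≤ ∫ r in (0:ℝ)..1, (A + c * r) * r^(n-1) := by
    apply intervalIntegral.integral_mono_on (by norm_num) hintF hintG
    intro r hr
    have hr0 : 0 ≤ r := hr.1
    have : (0:ℝ) ≤ r ^ (n-1) := Real.rpow_nonneg hr0 _
    exact mul_le_mul_of_nonneg_right (htan r hr) this
  -- compute RHS integral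
  have hI1 : ∫ r in (0:ℝ)..1, r^(n-1) = 1/n := by
    rw [integral_rpow (Or.inl (by linarith : (-1:ℝ) < n - 1))]
    rw [Real.one_rpow, Real.zero_rpow (by linarith : n - 1 + 1 ≠ 0)]
    rw [show n - 1 + 1 = n by ring]
    ring
  have hI2 : ∫ r in (0:ℝ)..1, r^n = 1/(n+1) := by
    rw [integral_rpow (Or.inl (by linarith : (-1:ℝ) < n))]
    rw [Real.one_rpow, Real.zero_rpow (by linarith : n + 1 ≠ 0)]
    ring
  have hsplit : ∫ r in (0:ℝ)..1, (A + c * r) * r^(n-1)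
      = A * (1/n) + c * (1/(n+1)) := by
    have heq : ∀ r ∈ Set.uIcc (0:ℝ) 1,
        (A + c * r) * r^(n-1) = A * r^(n-1) + c * r^n := by
      intro r hr
      rw [Set.uIcc_of_le (by norm_num : (0:ℝ) ≤ 1)] at hr
      have hr0 : 0 ≤ r := hr.1
      have hrn : r ^ n = r * r^(n-1) := by
        have h3 := Real.rpow_add' hr0 (show (1:ℝ) + (n-1) ≠ 0 by intro h; apply hn0.ne'; linarith)
        rw [Real.rpow_one, show (1:ℝ) + (n-1) = n by ring] at h3
        exact h3
      rw [hrn]; ring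
    rw [intervalIntegral.integral_congr heq]
    rw [intervalIntegral.integral_add (f := fun r : ℝ => A * r^(n-1)) (g := fun r : ℝ => c * r^n)
      ((continuous_const.mul hcontn).intervalIntegrable 0 1)
      ((continuous_const.mul (hcont_pow n hn0.le)).intervalIntegrable 0 1)]
    rw [intervalIntegral.integral_const_mul, intervalIntegral.integral_const_mul, hI1, hI2]
  have := mul_le_mul_of_nonneg_left hle hn0.le
  rw [hsplit] at this
  refine this.trans (le_of_eq ?_)
  rw [hA, hm]
  field_simp
  ring
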